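/- Define, for each natural number j, the polynomial P_j(x) = (1/2^j) Σ_{k=0}^{j} (binom(j,k))^2 (x−1)^{j−k} (x+1)^k. Then for every n ≥ 1, the polynomial P_n has exactly n distinct real roots, and all of them lie in the open interval (−1, 1). -/

import Mathlib

open Polynomial Finset

/-- The `j`-th Legendre polynomial
`P_j(x) = (1/2^j) ∑_{k=0}^{j} (binom(j,k))^2 (x-1)^{j-k} (x+1)^k`. -/
noncomputable def legP (j : ℕ) : Polynomial ℝ :=
  ((1 : ℝ) / 2 ^ j) • ∑ k ∈ Finset.range (j + 1),
    ((Nat.choose j k : ℝ) ^ 2) • ((Polynomial.X - 1) ^ (j - k) * (Polynomial.X + 1) ^ k)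

/-- The sum appearing in `legP`. -/
noncomputable def legA (n : ℕ) : Polynomial ℝ :=
  ∑ k ∈ Finset.range (n + 1),
    ((Nat.choose n k : ℝ) ^ 2) • ((X - 1) ^ (n - k) * (X + 1) ^ k)

lemma legP_eq_smul_legA (n : ℕ) : legP n = ((1 : ℝ) / 2 ^ n) • legA n := rfl

/-- The `k`-th derivative of `(x²-1)^n`. -/
noncomputable def legQ (n k : ℕ) : Polynomial ℝ :=
  Polynomial.derivative^[k] ((X - C 1) ^ n * (X - C (-1)) ^ n)

lemma legQ_succ (n k : ℕ) : legQ n (k + 1) = Polynomial.derivative (legQ n k) :=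
  Function.iterate_succ_apply' _ _ _

lemma legQ_expand (n k : ℕ) : legQ n k =
    ∑ i ∈ range (k + 1), k.choose i •
      ((n.descFactorial (k - i) • (X - C (1:ℝ)) ^ (n - (k - i))) *
        (n.descFactorial i • (X - C (-1:ℝ)) ^ (n - i))) := by
  rw [legQ, Polynomial.iterate_derivative_mul]
  simp_rw [Polynomial.iterate_derivative_X_sub_pow]

lemma legQ_eval_one {n k : ℕ} (h : k < n) : (legQ n k).eval 1 = 0 := by
  rw [legQ_expand, Polynomial.eval_finset_sum]
  refine Finset.sum_eq_zero fun i hi => ?_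
  have h1 : n - (k - i) ≠ 0 := Nat.sub_ne_zero_of_lt (lt_of_le_of_lt (Nat.sub_le k i) h)
  simp [zero_pow h1]

lemma legQ_eval_neg_one {n k : ℕ} (h : k < n) : (legQ n k).eval (-1) = 0 := by
  rw [legQ_expand, Polynomial.eval_finset_sum]
  refine Finset.sum_eq_zero fun i hi => ?_
  have h1 : n - i ≠ 0 := by
    have : i < n := lt_of_lt_of_le (Finset.mem_range.mp hi) h
    omega
  simp [zero_pow h1]

lemma legQ_eq (n : ℕ) : legQ n n = (n.factorial : ℝ) • legA n := by
  rw [legQ, Polynomial.iterate_derivative_mul]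
  simp_rw [Polynomial.iterate_derivative_X_sub_pow]
  rw [legA, Finset.smul_sum, ← Finset.sum_range_reflect]
  refine Finset.sum_congr rfl fun i hi => ?_
  have hin : i ≤ n := Nat.lt_succ_iff.mp (Finset.mem_range.mp hi)
  have e0 : n.succ - 1 - i = n - i := by omega
  rw [e0]
  have e2 : n - (n - i) = i := Nat.sub_sub_self hin
  rw [e2]
  have hC1 : (C (1:ℝ)) = (1 : Polynomial ℝ) := map_one C
  have hCm1 : (X - C (-1:ℝ)) = X + 1 := by rw [map_neg, map_one, sub_neg_eq_add]
  rw [hC1, hCm1]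
  rw [smul_mul_assoc, mul_smul_comm, smul_smul, smul_smul, smul_smul,
    ← Nat.cast_smul_eq_nsmul ℝ]
  congr 1
  have key : (n.choose (n - i)) * ((n.descFactorial i) * (n.descFactorial (n - i)))
      = n.factorial * (n.choose i)^2 := by
    rw [Nat.descFactorial_eq_factorial_mul_choose, Nat.descFactorial_eq_factorial_mul_choose,
      Nat.choose_symm hin]
    have := Nat.choose_mul_factorial_mul_factorial hin
    ring_nf
    nlinarith [this]
  have key2 : n.choose (n - i) * n.descFactorial i * n.descFactorial (n - i)
      = n.factorial * n.choose i ^ 2 := by rw [mul_assoc]; exact key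
  rw [key2]; push_cast; ring

lemma rolle_finset (p : Polynomial ℝ) :
    ∀ S : Finset ℝ, ∀ h : S.Nonempty, (∀ x ∈ S, p.eval x = 0) →
      ∃ T : Finset ℝ, T.card + 1 = S.card ∧
        ∀ y ∈ T, p.derivative.eval y = 0 ∧ y ∈ Set.Ioo (S.min' h) (S.max' h) := by
  intro S
  induction S using Finset.strongInduction with
  | _ S ih =>
    intro h hroots
    set M := S.max' h with hM
    by_cases h1 : S.card = 1
    · exact ⟨∅, by simp [h1], by simp⟩
    · have hMS : M ∈ S := S.max'_mem h
      have h2 : (S.erase M).Nonempty := by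
        rw [← Finset.card_pos, Finset.card_erase_of_mem hMS]
        have := Finset.card_pos.mpr h
        omega
      set M' := (S.erase M).max' h2 with hM'
      have hM'S : M' ∈ S.erase M := (S.erase M).max'_mem h2
      have hM'M : M' < M := by
        have h3 : M' ∈ S := Finset.mem_of_mem_erase hM'S
        have h4 : M' ≠ M := Finset.ne_of_mem_erase hM'S
        exact lt_of_le_of_ne (S.le_max' M' h3) h4
      obtain ⟨c, hc, hc0⟩ := exists_deriv_eq_zero hM'M
        (p.continuous.continuousOn)
        (by rw [hroots M' (Finset.mem_of_mem_erase hM'S), hroots M hMS])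
      rw [Polynomial.deriv] at hc0
      obtain ⟨T', hT'card, hT'⟩ := ih (S.erase M) (Finset.erase_ssubset hMS) h2
        (fun x hx => hroots x (Finset.mem_of_mem_erase hx))
      have hcT' : c ∉ T' := by
        intro hcmem
        have := (hT' c hcmem).2.2
        exact absurd this (not_lt.mpr hc.1.le)
      refine ⟨insert c T', ?_, ?_⟩
      · rw [Finset.card_insert_of_notMem hcT', hT'card, Finset.card_erase_of_mem hMS]
        have := Finset.card_pos.mpr h
        omega
      · intro y hy
        rcases Finset.mem_insert.mp hy with rfl | hyT'
        · refine ⟨hc0, ?_, hc.2⟩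
          exact lt_of_le_of_lt (Finset.min'_le S M' (Finset.mem_of_mem_erase hM'S)) hc.1
        · obtain ⟨hy0, hy1, hy2⟩ := hT' y hyT'
          refine ⟨hy0, lt_of_le_of_lt ?_ hy1, lt_trans (lt_of_lt_of_le hy2 ?_) hM'M⟩
          · exact Finset.min'_le S _ (Finset.mem_of_mem_erase ((S.erase M).min'_mem h2))
          · exact le_refl M'

lemma legQ_roots (n : ℕ) : ∀ k, k ≤ n → ∃ S : Finset ℝ, S.card = k ∧
    ∀ x ∈ S, (legQ n k).eval x = 0 ∧ x ∈ Set.Ioo (-1 : ℝ) 1 := by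
  intro k
  induction k with
  | zero => exact fun _ => ⟨∅, by simp, by simp⟩
  | succ k ih =>
    intro hk1
    have hkn : k < n := hk1
    obtain ⟨S, hScard, hS⟩ := ih (le_of_lt hkn)
    have h1S : (1 : ℝ) ∉ S := fun h => by simpa using (hS 1 h).2.2
    have hm1S : (-1 : ℝ) ∉ insert (1:ℝ) S := by
      simp only [Finset.mem_insert]
      rintro (h | h)
      · norm_num at h
      · have := (hS (-1) h).2.1; linarith
    set S' : Finset ℝ := insert (-1 : ℝ) (insert (1 : ℝ) S) with hS'
    have hS'card : S'.card = k + 2 := by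
      rw [hS', Finset.card_insert_of_notMem hm1S, Finset.card_insert_of_notMem h1S, hScard]
    have hS'ne : S'.Nonempty := ⟨-1, by simp [hS']⟩
    have hS'roots : ∀ x ∈ S', (legQ n k).eval x = 0 := by
      intro x hx
      rw [hS'] at hx
      rcases Finset.mem_insert.mp hx with rfl | hx
      · exact legQ_eval_neg_one hkn
      · rcases Finset.mem_insert.mp hx with rfl | hx
        · exact legQ_eval_one hkn
        · exact (hS x hx).1
    obtain ⟨T, hTcard, hT⟩ := rolle_finset (legQ n k) S' hS'ne hS'roots
    have hmin : (-1 : ℝ) ≤ S'.min' hS'ne := by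
      apply Finset.le_min'
      intro y hy
      rw [hS'] at hy
      rcases Finset.mem_insert.mp hy with rfl | hy
      · exact le_refl _
      · rcases Finset.mem_insert.mp hy with rfl | hy
        · norm_num
        · exact le_of_lt (hS y hy).2.1
    have hmax : S'.max' hS'ne ≤ 1 := by
      apply Finset.max'_le
      intro y hy
      rw [hS'] at hy
      rcases Finset.mem_insert.mp hy with rfl | hy
      · norm_num
      · rcases Finset.mem_insert.mp hy with rfl | hy
        · exact le_refl _
        · exact le_of_lt (hS y hy).2.2
    refine ⟨T, by omega, fun y hy => ?_⟩
    obtain ⟨hy0, hy1, hy2⟩ := hT y hy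
    rw [← legQ_succ] at hy0
    exact ⟨hy0, lt_of_le_of_lt hmin hy1, lt_of_lt_of_le hy2 hmax⟩

lemma legP_root_iff (n : ℕ) (x : ℝ) : (legP n).eval x = 0 ↔ (legQ n n).eval x = 0 := by
  rw [legP_eq_smul_legA, legQ_eq, Polynomial.eval_smul, Polynomial.eval_smul,
    smul_eq_mul, smul_eq_mul]
  constructor
  · intro h
    have h2 : (legA n).eval x = 0 := by
      have : ((1:ℝ)/2^n) ≠ 0 := by positivity
      field_simp at h
      simpa using h
    rw [h2, mul_zero]
  · intro h
    have h2 : (legA n).eval x = 0 := by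
      have hf : (n.factorial : ℝ) ≠ 0 := by positivity
      exact (mul_eq_zero.mp h).resolve_left hf
    rw [h2, mul_zero]

lemma legP_eval_one (n : ℕ) : (legP n).eval 1 = 1 := by
  rw [legP_eq_smul_legA, Polynomial.eval_smul, smul_eq_mul, legA, Polynomial.eval_finset_sum]
  rw [Finset.sum_eq_single n]
  · norm_num [one_add_one_eq_two]
  · intro b hb hbn
    have hbn' : n - b ≠ 0 := by
      have := Finset.mem_range.mp hb; omega
    simp [zero_pow hbn']
  · intro h
    exact absurd (Finset.self_mem_range_succ n) h

lemma legP_natDegree_le (n : ℕ) : (legP n).natDegree ≤ n := by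
  rw [legP_eq_smul_legA]
  refine (Polynomial.natDegree_smul_le _ _).trans ?_
  rw [legA]
  refine Polynomial.natDegree_sum_le_of_forall_le _ _ fun k hk => ?_
  refine (Polynomial.natDegree_smul_le _ _).trans ?_
  refine (Polynomial.natDegree_mul_le).trans ?_
  have h1 : ((X : Polynomial ℝ) - 1).natDegree ≤ 1 := by
    have : ((X : Polynomial ℝ) - 1) = X - C 1 := by rw [map_one]
    rw [this]; exact le_of_eq (Polynomial.natDegree_X_sub_C 1)
  have h2 : ((X : Polynomial ℝ) + 1).natDegree ≤ 1 := by
    have : ((X : Polynomial ℝ) + 1) = X + C 1 := by rw [map_one]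
    rw [this]; exact le_of_eq (Polynomial.natDegree_X_add_C 1)
  have hk' : k ≤ n := Nat.lt_succ_iff.mp (Finset.mem_range.mp hk)
  calc ((X - 1 : Polynomial ℝ) ^ (n - k)).natDegree + ((X + 1 : Polynomial ℝ) ^ k).natDegree
      ≤ (n - k) * 1 + k * 1 := by
        gcongr <;> [exact (Polynomial.natDegree_pow_le).trans (by gcongr);
          exact (Polynomial.natDegree_pow_le).trans (by gcongr)]
    _ ≤ n := by omega

/-- For `n ≥ 1`, `P_n` has exactly `n` distinct real roots, all lying in `(-1, 1)`. -/
theorem legendre_roots (n : ℕ) (hn : 1 ≤ n) :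
    ∃ S : Finset ℝ, S.card = n ∧
      (∀ x ∈ S, (legP n).eval x = 0 ∧ x ∈ Set.Ioo (-1 : ℝ) 1) ∧
      (∀ x : ℝ, (legP n).eval x = 0 → x ∈ S) := by
  obtain ⟨S, hScard, hS⟩ := legQ_roots n n (le_refl n)
  have hSP : ∀ x ∈ S, (legP n).eval x = 0 ∧ x ∈ Set.Ioo (-1 : ℝ) 1 := by
    intro x hx
    exact ⟨(legP_root_iff n x).mpr (hS x hx).1, (hS x hx).2⟩
  refine ⟨S, hScard, hSP, ?_⟩
  intro x hx
  have hp0 : legP n ≠ 0 := by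
    intro h
    have := legP_eval_one n
    rw [h] at this
    simp at this
  have hSsub : S ⊆ (legP n).roots.toFinset := by
    intro y hy
    rw [Multiset.mem_toFinset, Polynomial.mem_roots hp0]
    exact (hSP y hy).1
  have hcardle : (legP n).roots.toFinset.card ≤ n :=
    le_trans (Multiset.toFinset_card_le _)
      (le_trans (Polynomial.card_roots' _) (legP_natDegree_le n))
  have hEq : (legP n).roots.toFinset = S :=
    (Finset.eq_of_subset_of_card_le hSsub (by omega)).symm
  rw [← hEq, Multiset.mem_toFinset, Polynomial.mem_roots hp0]
  exact hx
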